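/- Let $M$ be an $R$-module and $T \subseteq Spec(M)$ such that every nontrivial submodule of $M$ is a vertex of the Zariski topology-graph $G(\tau_T)$. If the maximum degree $\Delta(G(\tau_T))$ is finite, then the length of $M$ as an $R$-module satisfies $l_R(M) \leq \Delta(G(\tau_T)) + 1$. -/

import Mathlib

open Submodule

section Defs
variable (R : Type*) [CommRing R] {M : Type*} [AddCommGroup M] [Module R M]

/-- `(N : M)`, the colon ideal of a submodule with the whole module. -/
def colonTop (N : Submodule R M) : Ideal R := N.colon ⊤

variable {R}

/-- A prime submodule. -/
def IsPrimeSubmodule (P : Submodule R M) : Prop :=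
  P ≠ ⊤ ∧ ∀ (r : R) (m : M), r • m ∈ P → r ∈ colonTop R P ∨ m ∈ P

/-- The prime spectrum of a module, as a set of submodules. -/
def specSet (R : Type*) [CommRing R] (M : Type*) [AddCommGroup M] [Module R M] :
    Set (Submodule R M) := {P | IsPrimeSubmodule P}

/-- `V(N)`. -/
def Vset (N : Submodule R M) : Set (Submodule R M) :=
  {P | IsPrimeSubmodule P ∧ colonTop R N ≤ colonTop R P}

/-- `V^*(N)`. -/
def VstarSet (N : Submodule R M) : Set (Submodule R M) :=
  {P | IsPrimeSubmodule P ∧ N ≤ P}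

/-- The product `NK = (N:M)(K:M)M` of two submodules. -/
def prodSub (N K : Submodule R M) : Submodule R M :=
  (colonTop R N * colonTop R K) • (⊤ : Submodule R M)

/-- The prime radical of a submodule. -/
def radicalSub (N : Submodule R M) : Submodule R M :=
  sInf {P | IsPrimeSubmodule P ∧ N ≤ P}

/-- Adjacency in the Zariski topology-graph `G(τ_T)`. -/
def ZAdj (T : Set (Submodule R M)) (N L : Submodule R M) : Prop :=
  N ≠ L ∧ N ≠ ⊤ ∧ L ≠ ⊤ ∧ Vset N ∪ Vset L = T ∧ Vset N ≠ T ∧ Vset L ≠ T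

/-- Vertices of the Zariski topology-graph `G(τ_T)`. -/
def ZVertex (T : Set (Submodule R M)) (N : Submodule R M) : Prop :=
  ∃ K, ZAdj T N K

/-- The Zariski topology-graph `G(τ_T)` as a simple graph on its vertex set. -/
def ZGraph (T : Set (Submodule R M)) : SimpleGraph {N : Submodule R M // ZVertex T N} where
  Adj a b := ZAdj T a.1 b.1
  symm := by
    constructor
    rintro a b ⟨h1, h2, h3, h4, h5, h6⟩
    exact ⟨h1.symm, h3, h2, by rwa [Set.union_comm], h6, h5⟩
  loopless := by constructor; rintro a ⟨h1, -⟩; exact h1 rfl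

end Defs
section Extra
variable {R : Type*} [CommRing R] {M : Type*} [AddCommGroup M] [Module R M]

/-- Prime submodule of a submodule `W`, internal version (i.e. a prime submodule of the
module `W`). -/
def IsPrimeIn (W P : Submodule R M) : Prop :=
  P < W ∧ ∀ (r : R) (m : M), m ∈ W → r • m ∈ P → (∀ x ∈ W, r • x ∈ P) ∨ m ∈ P

/-- The prime radical of `N` computed inside the submodule `W`. -/
def radicalIn (W N : Submodule R M) : Submodule R M :=
  sInf {P | IsPrimeIn W P ∧ N ≤ P} ⊓ W

/-- Vertices of the graph `AG(M)^*`. -/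
def AGstarVertex (N : Submodule R M) : Prop :=
  N ≠ ⊤ ∧ colonTop R N ≠ Module.annihilator R M ∧
    ∃ K, K ≠ ⊤ ∧ colonTop R K ≠ Module.annihilator R M ∧ prodSub N K = ⊥

/-- Adjacency in the graph `AG(M)^*`. -/
def AGstarAdj (N L : Submodule R M) : Prop :=
  N ≠ L ∧ AGstarVertex N ∧ AGstarVertex L ∧ prodSub N L = ⊥

/-- The clique number of a graph, valued in `ℕ∞`. -/
noncomputable def cliqueNumE {V : Type*} (G : SimpleGraph V) : ℕ∞ :=
  ⨆ n ∈ {n : ℕ | ∃ s, G.IsNClique n s}, (n : ℕ∞)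

end Extra
section Aux
variable {R : Type*} [CommRing R] {M : Type*} [AddCommGroup M] [Module R M]

lemma colonTop_mono' {N N' : Submodule R M} (h : N ≤ N') :
    colonTop R N ≤ colonTop R N' := fun r hr => by
  rw [colonTop, Submodule.mem_colon] at hr ⊢
  exact fun p hp => h (hr p hp)

lemma Vset_anti' {N N' : Submodule R M} (h : N ≤ N') : Vset N' ⊆ Vset N :=
  fun P hP => ⟨hP.1, (colonTop_mono' h).trans hP.2⟩

end Aux

/-- if every nontrivial submodule of `M` is a vertex of `G(τ_T)` and the
maximum degree is at most `d < ∞`, then the length of `M` (the supremum of lengths of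
strict chains of submodules) is at most `d + 1`. -/
theorem stmt9 {R : Type*} [CommRing R] {M : Type*} [AddCommGroup M] [Module R M]
    (T : Set (Submodule R M)) (hT : T.Nonempty)
    (hall : ∀ N : Submodule R M, N ≠ ⊥ → N ≠ ⊤ → ZVertex T N)
    (d : ℕ) (hfin : ∀ N : Submodule R M, {L | ZAdj T N L}.Finite)
    (hdeg : ∀ N : Submodule R M, {L | ZAdj T N L}.ncard ≤ d) :
    Order.krullDim (Submodule R M) ≤ (d + 1 : ℕ) := by
  have key : ∀ p : LTSeries (Submodule R M),
      p.length ≤ d + 1 := by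
    intro p
    by_contra hlen
    push_neg at hlen
    set n := p.length with hn
    -- the middle elements
    have hptop : ∀ i : Fin (n + 1), i.1 < n → p.toFun i ≠ ⊤ := by
      intro i hi heq
      have : p.toFun i < p.toFun ⟨n, by omega⟩ := p.strictMono (by simpa [Fin.lt_def])
      rw [heq] at this
      exact not_top_lt this
    have hpbot : ∀ i : Fin (n + 1), 0 < i.1 → p.toFun i ≠ ⊥ := by
      intro i hi heq
      have : p.toFun ⟨0, by omega⟩ < p.toFun i := p.strictMono (by rw [Fin.lt_def]; exact hi)
      rw [heq] at this
      exact not_lt_bot this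
    -- the top nontrivial element
    set N : Submodule R M := p.toFun ⟨n - 1, by omega⟩ with hN
    obtain ⟨K, hKne, hKtop', hKtop, hUK, hVN, hVK⟩ :=
      hall N (hpbot _ (by simp; omega)) (hptop _ (by simp; omega))
    -- each middle element is adjacent to K
    have g : ∀ i : Fin (n - 1), ZAdj T K (p.toFun ⟨i.1 + 1, by omega⟩) := by
      intro i
      set L : Submodule R M := p.toFun ⟨i.1 + 1, by omega⟩ with hL
      have hLN : L ≤ N := p.monotone (by simp [Fin.le_def])
      have hVLN : Vset N ⊆ Vset L := Vset_anti' hLN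
      have hKL : K ≠ L := by
        intro h
        apply hVK
        apply le_antisymm
        · rw [← hUK]; exact Set.subset_union_right
        · rw [← hUK]
          apply Set.union_subset _ le_rfl
          rw [h]; exact hVLN
      obtain ⟨K', hK'ne, hK'top', hK'top, hUK', hVL, hVK'⟩ :=
        hall L (hpbot _ (by simp)) (hptop _ (by simp; omega))
      refine ⟨hKL, hKtop, hptop _ (by simp; omega), ?_, hVK, hVL⟩
      apply le_antisymm
      · apply Set.union_subset
        · rw [← hUK]; exact Set.subset_union_right
        · rw [← hUK']; exact Set.subset_union_left
      · rw [← hUK]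
        apply Set.union_subset _ Set.subset_union_left
        exact hVLN.trans Set.subset_union_right
    -- build an injection into the neighbourhood of K, contradicting the degree bound
    set f : Fin (n - 1) → Submodule R M := fun i => p.toFun ⟨i.1 + 1, by omega⟩ with hf
    have hfinj : Function.Injective f := by
      intro i j hij
      have := p.strictMono.injective hij
      simp only [Fin.mk.injEq] at this
      exact Fin.ext (by omega)
    have hsub : f '' Set.univ ⊆ {L | ZAdj T K L} := by
      rintro x ⟨i, -, rfl⟩
      exact g i
    have hcard : (f '' Set.univ).ncard = n - 1 := by
      rw [Set.ncard_image_of_injective _ hfinj, Set.ncard_univ, Nat.card_eq_fintype_card,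
        Fintype.card_fin]
    have hle := Set.ncard_le_ncard hsub (hfin K)
    rw [hcard] at hle
    have := hdeg K
    omega
  refine iSup_le fun p => ?_
  exact_mod_cast key p
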